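/- If a class L of languages over an alphabet Σ has finite elasticity, then the class of Kleene closures { L* : L ∈ L } has finite elasticity. -/

import Mathlib

/-- A set system has finite elasticity if it has no infinite elasticity. -/
def FiniteElasticity {X : Type*} (𝓛 : Set (Set X)) : Prop :=
  ¬ ∃ (t : ℕ → X) (L : ℕ → Set X),
      (∀ i, L i ∈ 𝓛) ∧ (∀ i j, j ≤ i → t j ∈ L i) ∧ (∀ i, t (i + 1) ∉ L i)

/-- The Kleene closure of a language: all finite concatenations of words of `L`
(including the empty word). -/
def kleeneStar {σ : Type*} (L : Set (List σ)) : Set (List σ) :=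
  {x | ∃ ws : List (List σ), x = ws.flatten ∧ ∀ w ∈ ws, w ∈ L}

/-- Membership in the Kleene star can always be witnessed by a decomposition into
nonempty pieces. -/
lemma mem_kleeneStar_iff {σ : Type*} {L : Set (List σ)} {x : List σ} :
    x ∈ kleeneStar L ↔ ∃ ws : List (List σ),
      ws.flatten = x ∧ [] ∉ ws ∧ ∀ w ∈ ws, w ∈ L := by
  classical
  constructor
  · rintro ⟨ws, rfl, hws⟩
    refine ⟨ws.filter (fun l => l ≠ []), List.flatten_filter_ne_nil, ?_, ?_⟩
    · intro hmem
      simp [List.mem_filter] at hmem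
    · intro w hw
      exact hws w (List.mem_of_mem_filter hw)
  · rintro ⟨ws, rfl, -, hws⟩
    exact ⟨ws, rfl, hws⟩

/-- A fixed word has only finitely many decompositions into nonempty pieces. -/
lemma finite_decomps {σ : Type*} (t : List σ) :
    {ws : List (List σ) | ws.flatten = t ∧ [] ∉ ws}.Finite := by
  apply (Set.finite_range (fun c : Composition t.length => t.splitWrtComposition c)).subset
  rintro ws ⟨hflat, hnil⟩
  subst hflat
  have hpos : ∀ {i : ℕ}, i ∈ ws.map List.length → 0 < i := by
    intro i hi
    obtain ⟨w, hw, rfl⟩ := List.mem_map.1 hi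
    exact List.length_pos_iff.2 (fun h => hnil (h ▸ hw))
  refine ⟨⟨ws.map List.length, hpos, ?_⟩, ?_⟩
  · simp [List.length_flatten]
  · exact List.splitWrtComposition_flatten ws _ rfl

theorem stmt11 {σ : Type*} [Fintype σ] (𝓛 : Set (Set (List σ)))
    (h : FiniteElasticity 𝓛) :
    FiniteElasticity {M : Set (List σ) | ∃ L ∈ 𝓛, M = kleeneStar L} := by
  classical
  rintro ⟨t, K, hK, hmem, hnot⟩
  choose L hL hKL using hK
  set s : ℕ → List σ := fun n => t (n + 1) with hs
  have hsin : ∀ n m, n < m → s n ∈ kleeneStar (L m) := fun n m hnm => by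
    have := hmem m (n + 1) hnm
    rwa [hKL m] at this
  have hsout : ∀ n, s n ∉ kleeneStar (L n) := fun n => by
    have := hnot n
    rwa [hKL n] at this
  -- choose, for every `n < m`, a decomposition of `s n` into nonempty pieces in `L m`
  have hdec : ∀ n m, ∃ ws : List (List σ), n < m →
      ws.flatten = s n ∧ [] ∉ ws ∧ ∀ w ∈ ws, w ∈ L m := by
    intro n m
    by_cases hnm : n < m
    · obtain ⟨ws, h1, h2, h3⟩ := mem_kleeneStar_iff.1 (hsin n m hnm)
      exact ⟨ws, fun _ => ⟨h1, h2, h3⟩⟩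
    · exact ⟨[], fun hc => absurd hc hnm⟩
  choose g hg using hdec
  set U : Ultrafilter ℕ := Filter.hyperfilter ℕ with hU
  have hA : ∀ n : ℕ, {m | n < m} ∈ U := by
    intro n
    apply Filter.mem_hyperfilter_of_finite_compl
    have : {m | n < m}ᶜ = Set.Iic n := by
      ext m; simp [Set.mem_Iic, not_lt]
    rw [this]
    exact Set.finite_Iic n
  -- for each n, find one decomposition good for an ultrafilter-large set of m's
  have key : ∀ n, ∃ dn : List (List σ), dn.flatten = s n ∧ [] ∉ dn ∧
      {m | ∀ w ∈ dn, w ∈ L m} ∈ U := by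
    intro n
    have hDmem : {ws : List (List σ) | ws.flatten = s n ∧ [] ∉ ws} ∈ U.map (g n) := by
      apply Filter.mem_of_superset (hA n)
      intro m hm
      exact ⟨(hg n m hm).1, (hg n m hm).2.1⟩
    obtain ⟨dn, hdn, hpure⟩ :=
      Ultrafilter.eq_pure_of_finite_mem (finite_decomps (s n)) hDmem
    refine ⟨dn, hdn.1, hdn.2, ?_⟩
    have hsingle : {ws : List (List σ) | ws = dn} ∈ U.map (g n) := by
      rw [hpure]; simp [Filter.mem_pure]
    have hgd : {m | g n m = dn} ∈ U := hsingle
    have := Filter.inter_mem hgd (hA n)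
    apply Filter.mem_of_superset this
    rintro m ⟨h1, h2⟩ w hw
    exact (hg n m h2).2.2 w (h1 ▸ hw)
  choose d hd1 hd2 hd3 using key
  -- each chosen decomposition has a piece outside `L n`
  have hbad : ∀ n, ∃ w ∈ d n, w ∉ L n := by
    intro n
    by_contra hc
    push_neg at hc
    exact hsout n ⟨d n, (hd1 n).symm, hc⟩
  choose b hb1 hb2 using hbad
  -- recursively pick indices
  have hne : ∀ l : List ℕ, ∃ m : ℕ, ∀ x ∈ l, ∀ w ∈ d x, w ∈ L m := by
    intro l
    have hmem' : (⋂ x ∈ l, {m : ℕ | ∀ w ∈ d x, w ∈ L m}) ∈ U :=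
      (Filter.biInter_mem l.finite_toSet).2 fun x _ => hd3 x
    obtain ⟨m, hm⟩ := U.nonempty_of_mem hmem'
    refine ⟨m, fun x hx => ?_⟩
    have := Set.mem_iInter₂.1 hm x hx
    exact this
  let H : ℕ → List ℕ := fun k => Nat.rec [0] (fun _ ih => (hne ih).choose :: ih) k
  have hHsucc : ∀ k, H (k + 1) = (hne (H k)).choose :: H k := fun _ => rfl
  let N : ℕ → ℕ := fun k => (H k).headI
  have hN0 : N 0 = 0 := rfl
  have hNsucc : ∀ k, N (k + 1) = (hne (H k)).choose := fun _ => rfl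
  have hmemH : ∀ k j, j ≤ k → N j ∈ H k := by
    intro k
    induction k with
    | zero => intro j hj; interval_cases j; exact List.mem_singleton.2 rfl
    | succ k ih =>
      intro j hj
      rcases Nat.lt_succ_iff_lt_or_eq.1 (Nat.lt_succ_of_le hj) with h' | h'
      · exact hHsucc k ▸ List.mem_cons_of_mem _ (ih j (Nat.lt_succ_iff.1 h'))
      · rw [h', hHsucc k, hNsucc k]; exact List.mem_cons_self
  have hstep : ∀ k j, j ≤ k → ∀ w ∈ d (N j), w ∈ L (N (k + 1)) := by
    intro k j hj w hw
    rw [hNsucc k]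
    exact (hne (H k)).choose_spec (N j) (hmemH k j hj) w hw
  exact h ⟨fun k => b (N k), fun k => L (N (k + 1)), fun k => hL _,
    fun i j hji => hstep i j hji (b (N j)) (hb1 (N j)),
    fun i => hb2 (N (i + 1))⟩
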